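/- Let p be a prime, T the d-regular rooted tree, D ≥ 1, and P ≤ Aut(T^D) a minimal pattern subgroup which is a p-group, such that the group of finite type G_P is topologically finitely generated. Let 𝒜 be a finite invertible automaton over the alphabet {1,…,d} and G(𝒜) ≤ Aut(T) the group generated by the automorphisms defined by its states. If π_D(G(𝒜)) = P, then the closure of G(𝒜) in Aut(T) equals G_P. -/

import Mathlib

namespace TreeFT

/-- Port helper: `Equiv.Perm.apply_inv_self` was removed from Mathlib. -/
theorem Equiv.Perm.apply_inv_self {α : Type*} (f : Equiv.Perm α) (x : α) : f (f⁻¹ x) = x :=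
  _root_.Equiv.apply_symm_apply f x

/-- Port helper: `Equiv.Perm.inv_apply_self` was removed from Mathlib. -/
theorem Equiv.Perm.inv_apply_self {α : Type*} (f : Equiv.Perm α) (x : α) : f⁻¹ (f x) = x :=
  _root_.Equiv.symm_apply_apply f x

/-- Vertices of the `d`-regular rooted tree: finite words over `Fin d`. -/
abbrev Vertex (d : ℕ) := List (Fin d)

/-- The automorphism group of the `d`-regular rooted tree, realized as the subgroup of
permutations of the vertex set that preserve length (levels) and prefixes (adjacency). -/
def treeAut (d : ℕ) : Subgroup (Equiv.Perm (Vertex d)) where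
  carrier := {g | (∀ v : Vertex d, (g v).length = v.length) ∧
      (∀ v w : Vertex d, (g (v ++ w)).take v.length = g v)}
  one_mem' := ⟨fun _ => rfl, fun v w => List.take_left⟩
  mul_mem' := by
    rintro g h ⟨hg1, hg2⟩ ⟨hh1, hh2⟩
    refine ⟨fun v => by rw [Equiv.Perm.mul_apply, hg1, hh1], fun v w => ?_⟩
    have h1 : h (v ++ w) = h v ++ (h (v ++ w)).drop v.length := by
      conv_lhs => rw [← List.take_append_drop v.length (h (v ++ w))]
      rw [hh2]
    rw [Equiv.Perm.mul_apply, Equiv.Perm.mul_apply, h1]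
    have h2 : v.length = (h v).length := (hh1 v).symm
    rw [h2]
    exact hg2 _ _
  inv_mem' := by
    rintro g ⟨hg1, hg2⟩
    constructor
    · intro v
      have h := hg1 (g⁻¹ v)
      rw [Equiv.Perm.apply_inv_self] at h
      exact h.symm
    · intro v w
      apply g.injective
      have hlen : v.length ≤ (g⁻¹ (v ++ w)).length := by
        have h := hg1 (g⁻¹ (v ++ w))
        rw [Equiv.Perm.apply_inv_self] at h
        rw [← h, List.length_append]
        exact Nat.le_add_right _ _
      have h3 := hg2 ((g⁻¹ (v ++ w)).take v.length) ((g⁻¹ (v ++ w)).drop v.length)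
      rw [List.take_append_drop, Equiv.Perm.apply_inv_self, List.length_take,
        min_eq_left hlen, List.take_left] at h3
      rw [← h3, Equiv.Perm.apply_inv_self]

variable {d : ℕ}

/-- `Aut(T)` as a type. -/
abbrev TAut (d : ℕ) := ↥(treeAut d)

lemma length_apply (g : TAut d) (v : Vertex d) :
    ((g : Equiv.Perm (Vertex d)) v).length = v.length := g.2.1 v

lemma take_apply (g : TAut d) (v w : Vertex d) :
    ((g : Equiv.Perm (Vertex d)) (v ++ w)).take v.length = (g : Equiv.Perm (Vertex d)) v :=
  g.2.2 v w

lemma apply_append (g : TAut d) (v w : Vertex d) :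
    (g : Equiv.Perm (Vertex d)) (v ++ w) =
      (g : Equiv.Perm (Vertex d)) v ++ ((g : Equiv.Perm (Vertex d)) (v ++ w)).drop v.length := by
  conv_lhs => rw [← List.take_append_drop v.length ((g : Equiv.Perm (Vertex d)) (v ++ w))]
  rw [take_apply]

/-- The section `g|_v` of a tree automorphism at the vertex `v`. -/
def sect (g : TAut d) (v : Vertex d) : TAut d :=
  ⟨{ toFun := fun w => ((g : Equiv.Perm (Vertex d)) (v ++ w)).drop v.length
     invFun := fun w =>
       (((g : Equiv.Perm (Vertex d)))⁻¹ ((g : Equiv.Perm (Vertex d)) v ++ w)).drop v.length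
     left_inv := by
       intro w
       show ((g : Equiv.Perm (Vertex d))⁻¹
         ((g : Equiv.Perm (Vertex d)) v ++
           ((g : Equiv.Perm (Vertex d)) (v ++ w)).drop v.length)).drop v.length = w
       rw [← apply_append g v w, Equiv.Perm.inv_apply_self, List.drop_left]
     right_inv := by
       intro w
       show ((g : Equiv.Perm (Vertex d))
         (v ++ ((g : Equiv.Perm (Vertex d))⁻¹
           ((g : Equiv.Perm (Vertex d)) v ++ w)).drop v.length)).drop v.length = w
       have h2 := apply_append g⁻¹ ((g : Equiv.Perm (Vertex d)) v) w
       simp only [InvMemClass.coe_inv] at h2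
       rw [Equiv.Perm.inv_apply_self, length_apply] at h2
       rw [← h2, Equiv.Perm.apply_inv_self, ← length_apply g v, List.drop_left] },
   by
    constructor
    · intro w
      simp only [Equiv.coe_fn_mk, List.length_drop, length_apply, List.length_append]
      omega
    · intro w u
      simp only [Equiv.coe_fn_mk]
      rw [← List.append_assoc]
      have h0 : ((g : Equiv.Perm (Vertex d)) ((v ++ w) ++ u)).take (v ++ w).length
          = (g : Equiv.Perm (Vertex d)) (v ++ w) := take_apply g (v ++ w) u
      have h1 : w.length = (v.length + w.length) - v.length := by omega
      rw [h1, ← List.drop_take, ← List.length_append, h0]⟩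

lemma sect_apply (g : TAut d) (v w : Vertex d) :
    ((sect g v : TAut d) : Equiv.Perm (Vertex d)) w
      = ((g : Equiv.Perm (Vertex d)) (v ++ w)).drop v.length := rfl

lemma sect_mul (g h : TAut d) (v : Vertex d) :
    sect (g * h) v = sect g ((h : Equiv.Perm (Vertex d)) v) * sect h v := by
  apply Subtype.ext
  apply Equiv.ext
  intro w
  simp only [MulMemClass.coe_mul, Equiv.Perm.mul_apply, sect_apply]
  rw [← apply_append h v w, length_apply]

lemma sect_one (v : Vertex d) : sect (1 : TAut d) v = 1 := by
  apply Subtype.ext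
  apply Equiv.ext
  intro w
  simp only [sect_apply, OneMemClass.coe_one, Equiv.Perm.coe_one, id_eq]
  exact List.drop_left

end TreeFT
namespace TreeFT

variable {d : ℕ}

/-- The stabilizer `St(n)` of the `n`-th level: automorphisms acting trivially on the first
`n` levels of the tree. -/
def lst (d n : ℕ) : Subgroup (TAut d) where
  carrier := {g | ∀ v : Vertex d, v.length ≤ n → (g : Equiv.Perm (Vertex d)) v = v}
  one_mem' := fun _ _ => rfl
  mul_mem' := by
    intro g h hg hh v hv
    show (g : Equiv.Perm (Vertex d)) ((h : Equiv.Perm (Vertex d)) v) = v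
    rw [hh v hv, hg v hv]
  inv_mem' := by
    intro g hg v hv
    show ((g : Equiv.Perm (Vertex d)))⁻¹ v = v
    apply (g : Equiv.Perm (Vertex d)).injective
    rw [Equiv.Perm.apply_inv_self, hg v hv]

lemma mem_lst {g : TAut d} {n : ℕ} :
    g ∈ lst d n ↔ ∀ v : Vertex d, v.length ≤ n → (g : Equiv.Perm (Vertex d)) v = v :=
  Iff.rfl

instance lst_normal (d n : ℕ) : (lst d n).Normal := by
  constructor
  intro s hs g v hv
  show (g : Equiv.Perm (Vertex d))
    ((s : Equiv.Perm (Vertex d)) (((g : Equiv.Perm (Vertex d)))⁻¹ v)) = v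
  have h1 : ((g⁻¹ : TAut d) : Equiv.Perm (Vertex d)) v = ((g : Equiv.Perm (Vertex d)))⁻¹ v := by
    simp
  have h2 : (((g : Equiv.Perm (Vertex d)))⁻¹ v).length ≤ n := by
    rw [← h1, length_apply]; exact hv
  rw [hs _ h2, Equiv.Perm.apply_inv_self]

/-- `Aut(T^n)`, the automorphism group of the finite tree consisting of the first `n` levels,
realized as the quotient of `Aut(T)` by the `n`-th level stabilizer. -/
abbrev FAut (d n : ℕ) := TAut d ⧸ lst d n

/-- `π_n : Aut(T) → Aut(T^n)`, restriction to the first `n` levels. -/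
def proj (d n : ℕ) : TAut d →* FAut d n := QuotientGroup.mk' (lst d n)

lemma proj_surjective (d n : ℕ) : Function.Surjective (proj d n) :=
  QuotientGroup.mk'_surjective _

/-- The group of finite type `G_P` of depth `D` with pattern group `P ≤ Aut(T^D)`:
all tree automorphisms whose section at every vertex acts on the first `D` levels as an
element of `P`. -/
def gft (d D : ℕ) (P : Subgroup (FAut d D)) : Subgroup (TAut d) where
  carrier := {g | ∀ v : Vertex d, proj d D (sect g v) ∈ P}
  one_mem' := by
    intro v
    rw [sect_one, map_one]
    exact one_mem P
  mul_mem' := by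
    intro g h hg hh v
    rw [sect_mul, map_mul]
    exact mul_mem (hg _) (hh _)
  inv_mem' := by
    intro g hg v
    have h2 : sect g (((g⁻¹ : TAut d) : Equiv.Perm (Vertex d)) v) * sect g⁻¹ v = 1 := by
      rw [← sect_mul, mul_inv_cancel, sect_one]
    have h3 : sect g⁻¹ v = (sect g (((g⁻¹ : TAut d) : Equiv.Perm (Vertex d)) v))⁻¹ :=
      (inv_eq_of_mul_eq_one_right h2).symm
    rw [h3, map_inv]
    exact inv_mem (hg _)

lemma mem_gft {g : TAut d} {D : ℕ} {P : Subgroup (FAut d D)} :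
    g ∈ gft d D P ↔ ∀ v : Vertex d, proj d D (sect g v) ∈ P := Iff.rfl

/-- `P ≤ Aut(T^D)` is a minimal pattern subgroup if `π_D(G_P) = P`. -/
def IsMinimalPattern (d D : ℕ) (P : Subgroup (FAut d D)) : Prop :=
  (gft d D P).map (proj d D) = P

/-- A subgroup of `Aut(T)` is level-transitive if it acts transitively on every level. -/
def LevelTransitive (H : Subgroup (TAut d)) : Prop :=
  ∀ v w : Vertex d, v.length = w.length → ∃ g ∈ H, (g : Equiv.Perm (Vertex d)) v = w

/-- A subgroup of `Aut(T)` is self-similar if it contains all sections of its elements. -/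
def SelfSimilar (H : Subgroup (TAut d)) : Prop :=
  ∀ g ∈ H, ∀ v : Vertex d, sect g v ∈ H

/-- A subgroup of `Aut(T)` is fractal if it is self-similar, level-transitive, and for every
vertex `v` the section map maps the stabilizer of `v` onto the whole group. -/
def Fractal (H : Subgroup (TAut d)) : Prop :=
  SelfSimilar H ∧ LevelTransitive H ∧
    ∀ v : Vertex d, ∀ h ∈ H, ∃ k ∈ H, (k : Equiv.Perm (Vertex d)) v = v ∧ sect k v = h

/-- The geometric product `K_n` of `K` at level `n`: elements of `St(n)` all of whose sections
at level-`n` vertices lie in `K`. -/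
def geom (K : Subgroup (TAut d)) (n : ℕ) : Subgroup (TAut d) where
  carrier := {g | g ∈ lst d n ∧ ∀ v : Vertex d, v.length = n → sect g v ∈ K}
  one_mem' := ⟨one_mem _, fun v _ => by rw [sect_one]; exact one_mem K⟩
  mul_mem' := by
    rintro g h ⟨hg1, hg2⟩ ⟨hh1, hh2⟩
    refine ⟨mul_mem hg1 hh1, fun v hv => ?_⟩
    rw [sect_mul, hh1 v hv.le]
    exact mul_mem (hg2 v hv) (hh2 v hv)
  inv_mem' := by
    rintro g ⟨hg1, hg2⟩
    refine ⟨inv_mem hg1, fun v hv => ?_⟩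
    have hfix : ((g⁻¹ : TAut d) : Equiv.Perm (Vertex d)) v = v :=
      (inv_mem hg1 : g⁻¹ ∈ lst d n) v hv.le
    have h2 : sect g v * sect g⁻¹ v = 1 := by
      have := sect_mul g g⁻¹ v
      rw [mul_inv_cancel, sect_one, hfix] at this
      exact this.symm
    rw [(inv_eq_of_mul_eq_one_right h2).symm]
    exact inv_mem (hg2 v hv)

end TreeFT
namespace TreeFT

variable {d : ℕ}

/-- The congruence topology on `Aut(T)`: the topology of pointwise convergence on the vertex
set (each vertex set carrying the discrete topology); the level stabilizers `St(n)` form a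
base of neighborhoods of the identity for it. -/
instance tautTopologicalSpace (d : ℕ) : TopologicalSpace (TAut d) :=
  TopologicalSpace.induced
    (fun g : TAut d => ((g : Equiv.Perm (Vertex d)) : Vertex d → Vertex d))
    (@Pi.topologicalSpace (Vertex d) (fun _ => Vertex d) (fun _ => ⊥))

lemma isOpen_eval (d : ℕ) (v u : Vertex d) :
    IsOpen {g : TAut d | (g : Equiv.Perm (Vertex d)) v = u} := by
  letI : TopologicalSpace (Vertex d) := ⊥
  haveI : DiscreteTopology (Vertex d) := ⟨rfl⟩
  have h : IsOpen ((fun f : Vertex d → Vertex d => f v) ⁻¹' {u}) :=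
    (continuous_apply v : Continuous fun f : Vertex d → Vertex d => f v).isOpen_preimage ({u} : Set (Vertex d)) (isOpen_discrete _)
  exact isOpen_induced h

lemma isOpen_eval_mem (d : ℕ) (v : Vertex d) (s : Set (Vertex d)) :
    IsOpen {g : TAut d | (g : Equiv.Perm (Vertex d)) v ∈ s} := by
  have h : {g : TAut d | (g : Equiv.Perm (Vertex d)) v ∈ s}
      = ⋃ u ∈ s, {g : TAut d | (g : Equiv.Perm (Vertex d)) v = u} := by
    ext g; simp
  rw [h]
  exact isOpen_biUnion fun u _ => isOpen_eval d v u

lemma continuous_into_vertex {X : Type*} [TopologicalSpace X] (f : X → Vertex d)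
    (h : ∀ u : Vertex d, IsOpen (f ⁻¹' {u})) :
    @Continuous X (Vertex d) _ ⊥ f := by
  rw [continuous_def]
  intro s _
  have hs : f ⁻¹' s = ⋃ u ∈ s, f ⁻¹' {u} := by
    ext x; simp
  rw [hs]
  exact isOpen_biUnion fun u _ => h u

instance tautContinuousMul (d : ℕ) : ContinuousMul (TAut d) := by
  constructor
  · -- continuity of multiplication
    apply continuous_induced_rng.2
    apply @continuous_pi _ _ _ _ (fun _ => (⊥ : TopologicalSpace (Vertex d)))
    intro v
    apply continuous_into_vertex
      (f := fun p : TAut d × TAut d => ((p.1 * p.2 : TAut d) : Equiv.Perm (Vertex d)) v)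
    intro u
    have h : (fun p : TAut d × TAut d =>
          ((p.1 * p.2 : TAut d) : Equiv.Perm (Vertex d)) v) ⁻¹' {u}
        = ⋃ w : Vertex d, ({g : TAut d | (g : Equiv.Perm (Vertex d)) w = u} ×ˢ
            {h : TAut d | (h : Equiv.Perm (Vertex d)) v = w}) := by
      ext p
      simp only [Set.mem_preimage, Set.mem_singleton_iff, Set.mem_iUnion, Set.mem_prod,
        Set.mem_setOf_eq]
      constructor
      · intro hp
        exact ⟨(p.2 : Equiv.Perm (Vertex d)) v, hp, rfl⟩
      · rintro ⟨w, hw1, hw2⟩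
        show (p.1 : Equiv.Perm (Vertex d)) ((p.2 : Equiv.Perm (Vertex d)) v) = u
        rw [hw2]; exact hw1
    rw [h]
    exact isOpen_iUnion fun w => (isOpen_eval d w u).prod (isOpen_eval d v w)

instance tautContinuousInv (d : ℕ) : ContinuousInv (TAut d) := by
  constructor
  · -- continuity of inversion
    apply continuous_induced_rng.2
    apply @continuous_pi _ _ _ _ (fun _ => (⊥ : TopologicalSpace (Vertex d)))
    intro v
    apply continuous_into_vertex
      (f := fun g : TAut d => ((g⁻¹ : TAut d) : Equiv.Perm (Vertex d)) v)
    intro u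
    have h : (fun g : TAut d => ((g⁻¹ : TAut d) : Equiv.Perm (Vertex d)) v) ⁻¹' {u}
        = {g : TAut d | (g : Equiv.Perm (Vertex d)) u = v} := by
      ext g
      simp only [Set.mem_preimage, Set.mem_singleton_iff, Set.mem_setOf_eq,
        InvMemClass.coe_inv]
      constructor
      · intro hg; rw [← hg, Equiv.Perm.apply_inv_self]
      · intro hg; rw [← hg, Equiv.Perm.inv_apply_self]
    rw [h]
    exact isOpen_eval d u v

instance tautTopologicalGroup (d : ℕ) : IsTopologicalGroup (TAut d) := ⟨⟩

/-- A subgroup of `Aut(T)` (viewed as a topological group with the congruence topology) is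
topologically finitely generated if it contains a finitely generated dense subgroup. -/
def TopFG (H : Subgroup (TAut d)) : Prop :=
  ∃ S : Set ↥H, S.Finite ∧ Dense ((Subgroup.closure S : Subgroup ↥H) : Set ↥H)

/-- A profinite group is just-infinite if it is infinite and every nontrivial closed normal
subgroup has finite index. -/
def JustInfinite (H : Subgroup (TAut d)) : Prop :=
  Infinite ↥H ∧ ∀ N : Subgroup ↥H, N.Normal → IsClosed (N : Set ↥H) → N ≠ ⊥ → N.index ≠ 0

/-- A profinite group is strongly complete if every subgroup of finite index is open. -/
def StronglyComplete (H : Subgroup (TAut d)) : Prop :=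
  ∀ N : Subgroup ↥H, N.index ≠ 0 → IsOpen (N : Set ↥H)

end TreeFT

namespace TreeFT

/-- A finite invertible automaton over the alphabet `{1,…,d}`, presented through the tree
automorphisms defined by its states: a finite set `Q` of states, for each state `q` the
automorphism `gen q ∈ Aut(T)` it defines, and a transition function `trans` recording that
the level-one sections of the state automorphisms are again state automorphisms
(`g_q|_x = g_{q'}` where `τ(q,x) = (y,q')`). -/
structure FiniteAutomaton (d : ℕ) where
  /-- the (finitely many) states -/
  Q : Type
  [fin : Fintype Q]
  /-- the tree automorphism defined by each state -/
  gen : Q → TAut d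
  /-- the state transition function -/
  trans : Q → Fin d → Q
  /-- sections of state automorphisms at level-one vertices are state automorphisms -/
  compat : ∀ q x, sect (gen q) [x] = gen (trans q x)

/-- The group `G(𝒜)` generated by a finite invertible automaton. -/
def automatonGroup {d : ℕ} (A : FiniteAutomaton d) : Subgroup (TAut d) :=
  Subgroup.closure (Set.range A.gen)

section Basics

variable {d : ℕ}

lemma sect_nil (g : TAut d) : sect g [] = g := by
  apply Subtype.ext; apply Equiv.ext; intro u
  simp [sect_apply]

lemma sect_sect (g : TAut d) (v w : Vertex d) :
    sect (sect g v) w = sect g (v ++ w) := by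
  apply Subtype.ext; apply Equiv.ext; intro u
  simp only [sect_apply, List.append_assoc, List.length_append, List.drop_drop]

lemma sect_inv (g : TAut d) (v : Vertex d) :
    sect g⁻¹ v = (sect g (((g⁻¹ : TAut d) : Equiv.Perm (Vertex d)) v))⁻¹ := by
  have h := sect_mul g g⁻¹ v
  rw [mul_inv_cancel, sect_one] at h
  exact (inv_eq_of_mul_eq_one_right h.symm).symm

lemma length_one_letter (g : TAut d) (x : Fin d) :
    ∃ y : Fin d, (g : Equiv.Perm (Vertex d)) [x] = [y] := by
  have : ((g : Equiv.Perm (Vertex d)) [x]).length = 1 := by rw [length_apply]; rfl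
  rcases List.length_eq_one_iff.mp this with ⟨y, hy⟩
  exact ⟨y, hy⟩

lemma automatonGroup_sect_letter {A : FiniteAutomaton d} {a : TAut d}
    (ha : a ∈ automatonGroup A) : ∀ x : Fin d, sect a [x] ∈ automatonGroup A := by
  refine Subgroup.closure_induction ?_ ?_ ?_ ?_ ha
  · rintro g ⟨q, rfl⟩ x
    rw [A.compat q x]
    exact Subgroup.subset_closure ⟨A.trans q x, rfl⟩
  · intro x
    rw [sect_one]
    exact one_mem _
  · intro g h _ _ hg hh x
    rcases length_one_letter h x with ⟨y, hy⟩
    rw [sect_mul, hy]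
    exact mul_mem (hg y) (hh x)
  · intro g _ hg x
    rcases length_one_letter g⁻¹ x with ⟨y, hy⟩
    rw [sect_inv, hy]
    exact inv_mem (hg y)

lemma automatonGroup_sect {A : FiniteAutomaton d} {a : TAut d}
    (ha : a ∈ automatonGroup A) : ∀ v : Vertex d, sect a v ∈ automatonGroup A := by
  intro v
  induction v generalizing a with
  | nil => rw [sect_nil]; exact ha
  | cons y u ih =>
      have : (y :: u : Vertex d) = [y] ++ u := rfl
      rw [this, ← sect_sect]
      exact ih (automatonGroup_sect_letter ha y)

lemma gft_sect {D : ℕ} {P : Subgroup (FAut d D)} {g : TAut d}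
    (hg : g ∈ gft d D P) (v : Vertex d) : sect g v ∈ gft d D P := by
  intro w
  rw [sect_sect]
  exact hg (v ++ w)

lemma gft_proj_mem {D : ℕ} {P : Subgroup (FAut d D)} {g : TAut d}
    (hg : g ∈ gft d D P) : proj d D g ∈ P := by
  have := hg []
  rwa [sect_nil] at this

lemma automatonGroup_le_gft {D : ℕ} {P : Subgroup (FAut d D)} {A : FiniteAutomaton d}
    (hproj : (automatonGroup A).map (proj d D) = P) :
    automatonGroup A ≤ gft d D P := by
  intro a ha v
  rw [← hproj]
  exact ⟨sect a v, automatonGroup_sect ha v, rfl⟩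

lemma mk'_eq_iff {G : Type*} [Group G] (N : Subgroup G) [N.Normal] {a b : G} :
    QuotientGroup.mk' N a = QuotientGroup.mk' N b ↔ a⁻¹ * b ∈ N := by
  rw [QuotientGroup.mk'_eq_mk']
  constructor
  · rintro ⟨z, hz, rfl⟩; simpa using hz
  · intro hz; exact ⟨a⁻¹ * b, hz, by group⟩

lemma proj_eq_proj {n : ℕ} {g h : TAut d} :
    proj d n g = proj d n h ↔ g⁻¹ * h ∈ lst d n := mk'_eq_iff _

lemma proj_eq_one {n : ℕ} {g : TAut d} :
    proj d n g = 1 ↔ g ∈ lst d n := by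
  rw [show (1 : FAut d n) = proj d n 1 from (map_one _).symm, proj_eq_proj]
  simp

lemma lst_antitone {m n : ℕ} (h : m ≤ n) : lst d n ≤ lst d m := by
  intro g hg v hv
  exact hg v (hv.trans h)

lemma mem_lst_mul_iff {n : ℕ} {g h : TAut d} :
    g⁻¹ * h ∈ lst d n ↔ ∀ v : Vertex d, v.length ≤ n → (h : Equiv.Perm (Vertex d)) v
      = (g : Equiv.Perm (Vertex d)) v := by
  constructor
  · intro hm v hv
    have := hm v hv
    simp only [MulMemClass.coe_mul, InvMemClass.coe_inv, Equiv.Perm.mul_apply] at this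
    have := congrArg (g : Equiv.Perm (Vertex d)) this
    rwa [Equiv.Perm.apply_inv_self] at this
  · intro hagree v hv
    show ((g⁻¹ : TAut d) : Equiv.Perm (Vertex d)) (((h : TAut d) : Equiv.Perm (Vertex d)) v) = v
    rw [hagree v hv]
    simp

lemma sect_mem_lst {g : TAut d} {n k : ℕ} (hg : g ∈ lst d (n + k))
    {u : Vertex d} (hu : u.length ≤ n) : sect g u ∈ lst d k := by
  intro w hw
  rw [sect_apply]
  have : (g : Equiv.Perm (Vertex d)) (u ++ w) = u ++ w := by
    apply hg
    rw [List.length_append]; omega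
  rw [this, List.drop_left]

end Basics

section Topology

variable {d : ℕ}

lemma isOpen_lst (d n : ℕ) : IsOpen ((lst d n : Subgroup (TAut d)) : Set (TAut d)) := by
  have he : ((lst d n : Subgroup (TAut d)) : Set (TAut d)) =
      ⋂ v ∈ {v : Vertex d | v.length ≤ n},
        {g : TAut d | (g : Equiv.Perm (Vertex d)) v = v} := by
    ext g
    simp only [SetLike.mem_coe, mem_lst, Set.mem_iInter, Set.mem_setOf_eq]
  rw [he]
  exact (List.finite_length_le (Fin d) n).isOpen_biInter fun v _ => isOpen_eval d v v

lemma isClosed_lst (d n : ℕ) : IsClosed ((lst d n : Subgroup (TAut d)) : Set (TAut d)) :=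
  Subgroup.isClosed_of_isOpen _ (isOpen_lst d n)

lemma isOpen_cyl (g : TAut d) (n : ℕ) : IsOpen {h : TAut d | g⁻¹ * h ∈ lst d n} := by
  have : {h : TAut d | g⁻¹ * h ∈ lst d n}
      = (fun h : TAut d => g⁻¹ * h) ⁻¹' (lst d n : Subgroup (TAut d)) := rfl
  rw [this]
  exact (isOpen_lst d n).preimage (continuous_const.mul continuous_id)

lemma sect_proj_eq_of_agree {g h : TAut d} {v : Vertex d} {D : ℕ}
    (hagree : g⁻¹ * h ∈ lst d (v.length + D)) :
    proj d D (sect g v) = proj d D (sect h v) := by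
  rw [proj_eq_proj]
  rw [mem_lst_mul_iff]
  intro w hw
  rw [sect_apply, sect_apply]
  congr 1
  rw [mem_lst_mul_iff] at hagree
  apply hagree
  rw [List.length_append]
  omega

lemma isClosed_gft (d D : ℕ) (P : Subgroup (FAut d D)) :
    IsClosed ((gft d D P : Subgroup (TAut d)) : Set (TAut d)) := by
  rw [← isOpen_compl_iff]
  rw [isOpen_iff_forall_mem_open]
  intro g hg
  simp only [Set.mem_compl_iff, SetLike.mem_coe, mem_gft, not_forall] at hg
  obtain ⟨v, hv⟩ := hg
  refine ⟨{h : TAut d | g⁻¹ * h ∈ lst d (v.length + D)}, ?_, isOpen_cyl _ _, by simp only [Set.mem_setOf_eq, inv_mul_cancel]; exact one_mem _⟩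
  intro h hh
  simp only [Set.mem_compl_iff, SetLike.mem_coe, mem_gft, not_forall]
  refine ⟨v, ?_⟩
  rwa [← sect_proj_eq_of_agree hh]

lemma mem_closure_of_approx {S : Set (TAut d)} {g : TAut d}
    (h : ∀ n, ∃ a ∈ S, g⁻¹ * a ∈ lst d n) : g ∈ closure S := by
  rw [mem_closure_iff]
  intro o ho hgo
  obtain ⟨W, hW, rfl⟩ := (@isOpen_induced_iff (TAut d) (Vertex d → Vertex d)
    (@Pi.topologicalSpace (Vertex d) (fun _ => Vertex d) (fun _ => ⊥)) o
    (fun g : TAut d => ((g : Equiv.Perm (Vertex d)) : Vertex d → Vertex d))).mp ho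
  obtain ⟨I, u, hIu, hsub⟩ :=
    (@isOpen_pi_iff (Vertex d) (fun _ => Vertex d) (fun _ => ⊥) W).mp hW _ hgo
  obtain ⟨a, haS, ha⟩ := h (I.sup List.length)
  refine ⟨a, ?_, haS⟩
  apply hsub
  intro v hv
  rw [mem_lst_mul_iff] at ha
  have : (a : Equiv.Perm (Vertex d)) v = (g : Equiv.Perm (Vertex d)) v :=
    ha v (Finset.le_sup hv)
  show (a : Equiv.Perm (Vertex d)) v ∈ u v
  rw [this]
  exact (hIu v hv).2

lemma finite_FAut (d n : ℕ) : Finite (FAut d n) := by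
  haveI : Finite {v : Vertex d | v.length ≤ n} := (List.finite_length_le (Fin d) n).to_subtype
  let F : TAut d → ({v : Vertex d | v.length ≤ n} → {v : Vertex d | v.length ≤ n}) :=
    fun g v => ⟨(g : Equiv.Perm (Vertex d)) v.1, by
      simp only [Set.mem_setOf_eq, length_apply]; exact v.2⟩
  have hresp : ∀ a b : TAut d, (QuotientGroup.leftRel (lst d n)).r a b → F a = F b := by
    intro a b hab
    rw [QuotientGroup.leftRel_apply] at hab
    funext v
    apply Subtype.ext
    exact (mem_lst_mul_iff.mp hab v v.2).symm
  have hinj : Function.Injective (Quotient.lift F hresp : FAut d n → _) := by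
    intro q q'
    induction q using Quotient.ind
    induction q' using Quotient.ind
    rename_i a b
    intro hab
    have hab' : F a = F b := hab
    refine Quotient.sound (QuotientGroup.leftRel_apply.mpr (mem_lst_mul_iff.mpr ?_))
    intro v hv
    exact (congrArg (fun f => ((f ⟨v, hv⟩ : {v : Vertex d | v.length ≤ n}) : Vertex d)) hab').symm
  exact Finite.of_injective _ hinj

end Topology

section PGroupLevels

variable {d : ℕ}

lemma mem_lst_zero (g : TAut d) : g ∈ lst d 0 := by
  intro v hv
  have hv0 : v = [] := List.length_eq_zero_iff.mp (Nat.le_zero.mp hv)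
  subst hv0
  have : ((g : Equiv.Perm (Vertex d)) ([] : Vertex d)).length = 0 := length_apply g []
  exact List.length_eq_zero_iff.mp this

lemma apply_pow_append {n : ℕ} {s : TAut d} (hs : s ∈ lst d n)
    {u : Vertex d} (hu : u.length ≤ n) (m : ℕ) (w : Vertex d) :
    ((s ^ m : TAut d) : Equiv.Perm (Vertex d)) (u ++ w)
      = u ++ ((sect s u ^ m : TAut d) : Equiv.Perm (Vertex d)) w := by
  induction m with
  | zero => simp
  | succ k ih =>
      rw [pow_succ', pow_succ']
      simp only [MulMemClass.coe_mul, Equiv.Perm.mul_apply]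
      rw [ih]
      have h1 : (s : Equiv.Perm (Vertex d)) u = u := hs u hu
      have h2 := apply_append s u (((sect s u ^ k : TAut d) : Equiv.Perm (Vertex d)) w)
      rw [h1] at h2
      rw [h2]
      congr 1

lemma pgroup_level {p D : ℕ} (hp : p.Prime) (hD : 1 ≤ D) {P : Subgroup (FAut d D)}
    (hPp : IsPGroup p ↥P) (n : ℕ) :
    ∀ g ∈ gft d D P, ∃ k : ℕ, (proj d n g) ^ (p ^ k) = 1 := by
  haveI : Fact p.Prime := ⟨hp⟩
  haveI : Finite (FAut d D) := finite_FAut d D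
  haveI : Finite ↥P := Subtype.finite
  obtain ⟨c, hc⟩ := hPp.exists_card_eq
  induction n with
  | zero =>
      intro g hg
      refine ⟨0, ?_⟩
      rw [pow_zero, pow_one, proj_eq_one]
      exact mem_lst_zero g
  | succ n ih =>
      intro g hg
      obtain ⟨k₁, hk₁⟩ := ih g hg
      set g' : TAut d := g ^ (p ^ k₁) with hg'def
      have hg'lst : g' ∈ lst d n := by
        rw [← proj_eq_one (n := n)]
        rw [map_pow]
        exact hk₁
      have hg'gft : g' ∈ gft d D P := pow_mem hg (p ^ k₁)
      refine ⟨k₁ + c, ?_⟩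
      rw [pow_add, pow_mul, ← map_pow, ← hg'def, ← map_pow, proj_eq_one]
      intro v hv
      rcases Nat.lt_or_ge v.length (n + 1) with hlen | hlen
      · have : g' ^ (p ^ c) ∈ lst d n := pow_mem hg'lst _
        exact this v (by omega)
      · have hvn : v.length = n + 1 := le_antisymm hv hlen
        rcases List.eq_nil_or_concat' v with rfl | ⟨u, x, rfl⟩
        · simp at hvn
        · have hu : u.length = n := by
            rw [List.length_append] at hvn; simpa using hvn
          rw [apply_pow_append hg'lst hu.le]
          congr 1
          have hsgft : sect g' u ∈ gft d D P := gft_sect hg'gft u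
          have hsP : proj d D (sect g' u) ∈ P := gft_proj_mem hsgft
          have horder : orderOf (⟨proj d D (sect g' u), hsP⟩ : ↥P) ∣ p ^ c := by
            rw [← hc]; exact orderOf_dvd_natCard _
          have hpow : (proj d D (sect g' u)) ^ (p ^ c) = 1 := by
            have := orderOf_dvd_iff_pow_eq_one.mp horder
            have := congrArg (Subtype.val) this
            simpa using this
          have hlstD : sect g' u ^ (p ^ c) ∈ lst d D := by
            rw [← proj_eq_one, map_pow]
            exact hpow
          exact hlstD [x] (by simpa using hD)

end PGroupLevels

section FinPGroup

lemma mult_zmod_pow_p {p : ℕ} (x : Multiplicative (ZMod p)) : x ^ p = 1 := by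
  apply Multiplicative.toAdd.injective
  show p • x.toAdd = 0
  rw [nsmul_eq_mul]
  simp [ZMod.natCast_self]

lemma exists_hom_pgroup {p : ℕ} (hp : p.Prime) {Γ' : Type*} [Group Γ'] [Finite Γ']
    (hpg : IsPGroup p Γ') (K : Subgroup Γ') (hK : K ≠ ⊤) :
    ∃ χ : Γ' →* Multiplicative (ZMod p), K ≤ χ.ker ∧ χ ≠ 1 := by
  haveI : Fact p.Prime := ⟨hp⟩
  haveI : NeZero p := ⟨hp.ne_zero⟩
  haveI : Finite (Subgroup Γ') :=
    Finite.of_injective (fun H : Subgroup Γ' => (H : Set Γ')) SetLike.coe_injective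
  haveI := Finite.to_isCoatomic (α := Subgroup Γ')
  rcases IsCoatomic.eq_top_or_exists_le_coatom K with rfl | ⟨M, hM, hKM⟩
  · exact absurd rfl hK
  haveI : Group.IsNilpotent Γ' := hpg.isNilpotent
  have hnc : NormalizerCondition Γ' := normalizerCondition_of_isNilpotent
  haveI hMnormal : M.Normal := Subgroup.NormalizerCondition.normal_of_coatom M hnc hM
  -- the quotient
  set Q' := Γ' ⧸ M with hQ'
  obtain ⟨y₀, hy₀⟩ : ∃ y₀ : Γ', y₀ ∉ M := by
    by_contra hcon
    push_neg at hcon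
    exact hM.1 ((Subgroup.eq_top_iff' M).mpr hcon)
  have hQ'nontriv : Nontrivial Q' := by
    refine ⟨⟨(y₀ : Q'), 1, ?_⟩⟩
    rw [Ne, QuotientGroup.eq_one_iff]
    exact hy₀
  have hQ'p : IsPGroup p Q' := hpg.to_quotient M
  haveI : Fintype Q' := Fintype.ofFinite Q'
  have hdvd : p ∣ Fintype.card Q' := by
    obtain ⟨n, hn0, hn⟩ := hQ'p.nontrivial_iff_card.mp hQ'nontriv
    rw [← Nat.card_eq_fintype_card, hn]
    exact dvd_pow_self p (by omega)
  obtain ⟨x, hx⟩ := exists_prime_orderOf_dvd_card p hdvd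
  -- zpowers x = ⊤
  have hZtop : Subgroup.zpowers x = ⊤ := by
    have hle : M ≤ (Subgroup.zpowers x).comap (QuotientGroup.mk' M) := by
      intro m hm
      simp only [Subgroup.mem_comap, QuotientGroup.mk'_apply]
      rw [show ((m : Q')) = 1 from (QuotientGroup.eq_one_iff m).mpr hm]
      exact one_mem _
    obtain ⟨y, hy⟩ := QuotientGroup.mk'_surjective M x
    have hyM : y ∉ M := by
      intro hmem
      have : x = 1 := by rw [← hy]; exact (QuotientGroup.eq_one_iff y).mpr hmem
      rw [this, orderOf_one] at hx
      exact hp.one_lt.ne hx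
    have hlt : M < (Subgroup.zpowers x).comap (QuotientGroup.mk' M) := by
      refine lt_of_le_of_ne hle ?_
      intro heq
      apply hyM
      rw [heq]
      rw [Subgroup.mem_comap, hy]
      exact Subgroup.mem_zpowers x
    have htop := hM.2 _ hlt
    rw [Subgroup.eq_top_iff']
    intro q
    obtain ⟨z, hz⟩ := QuotientGroup.mk'_surjective M q
    have : z ∈ (Subgroup.zpowers x).comap (QuotientGroup.mk' M) := by
      rw [htop]; trivial
    rw [Subgroup.mem_comap, hz] at this
    exact this
  have hcardQ' : Fintype.card Q' = p := by
    rw [← Nat.card_eq_fintype_card, ← Subgroup.card_top (G := Q'), ← hZtop, Nat.card_zpowers, hx]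
  -- the homomorphism Multiplicative (ZMod p) →* Q'
  have hxp : orderOf x = p := hx
  let f : Multiplicative (ZMod p) →* Q' :=
    { toFun := fun i => x ^ (i.toAdd.val)
      map_one' := by
        show x ^ ((0 : ZMod p).val) = 1
        rw [ZMod.val_zero, pow_zero]
      map_mul' := by
        intro a b
        show x ^ ((a.toAdd + b.toAdd).val) = x ^ a.toAdd.val * x ^ b.toAdd.val
        rw [← pow_add, pow_eq_pow_iff_modEq, hxp, ZMod.val_add]
        exact (Nat.mod_modEq _ p) }
  have hfinj : Function.Injective f := by
    rw [injective_iff_map_eq_one]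
    intro a ha
    have : x ^ (a.toAdd.val) = 1 := ha
    rw [← orderOf_dvd_iff_pow_eq_one, hxp] at this
    have hlt : a.toAdd.val < p := ZMod.val_lt a.toAdd
    have hval0 : a.toAdd.val = 0 := Nat.eq_zero_of_dvd_of_lt this hlt
    apply Multiplicative.toAdd.injective
    have := (ZMod.val_eq_zero a.toAdd).mp hval0
    simpa using this
  have hbij : Function.Bijective f := by
    rw [Fintype.bijective_iff_injective_and_card]
    refine ⟨hfinj, ?_⟩
    rw [Fintype.card_multiplicative, ZMod.card, hcardQ']
  let e := MulEquiv.ofBijective f hbij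
  refine ⟨e.symm.toMonoidHom.comp (QuotientGroup.mk' M), ?_, ?_⟩
  · intro k hk
    have hkM : k ∈ M := hKM hk
    rw [MonoidHom.mem_ker, MonoidHom.comp_apply]
    rw [QuotientGroup.mk'_apply, show ((k : Q')) = 1 from (QuotientGroup.eq_one_iff k).mpr hkM]
    exact map_one _
  · intro hcon
    have h1 : e.symm ((y₀ : Q')) = 1 := by
      have := congrArg (fun χ => χ y₀) hcon
      simp at this ⊢
      exact this
    have h2 : e.symm (1 : Q') = 1 := map_one _
    have : ((y₀ : Q')) = 1 := e.symm.injective (h1.trans h2.symm)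
    exact hy₀ ((QuotientGroup.eq_one_iff y₀).mp this)

end FinPGroup

section Vfinite

lemma finite_closure_of_exponent {G : Type*} [Group G] (hcomm : ∀ x y : G, x * y = y * x)
    {p : ℕ} (hp : 0 < p) (hexp : ∀ x : G, x ^ p = 1) {T : Set G} (hT : T.Finite) :
    ((Subgroup.closure T : Subgroup G) : Set G).Finite := by
  classical
  letI : CommGroup G := { (inferInstance : Group G) with mul_comm := hcomm }
  have key : ∀ F : Finset G, ((Subgroup.closure (F : Set G) : Subgroup G) : Set G).Finite := by
    intro F
    induction F using Finset.induction_on with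
    | empty =>
        rw [Finset.coe_empty, Subgroup.closure_empty, Subgroup.coe_bot]
        exact Set.finite_singleton 1
    | @insert a F' ha ih =>
        rw [Finset.coe_insert, Set.insert_eq, Subgroup.closure_union,
          ← Subgroup.zpowers_eq_closure, Subgroup.mul_normal]
        exact Set.Finite.mul
          ((isOfFinOrder_iff_pow_eq_one.mpr ⟨p, hp, hexp a⟩).finite_zpowers) ih
  have := key hT.toFinset
  rwa [Set.Finite.coe_toFinset] at this

variable {p d D : ℕ} {P : Subgroup (FAut d D)} {A : FiniteAutomaton d}

/-- The property of being a continuous character killing the automaton group. -/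
def VProp (p : ℕ) {d D : ℕ} (P : Subgroup (FAut d D)) (A : FiniteAutomaton d)
    (χ : ↥(gft d D P) →* Multiplicative (ZMod p)) : Prop :=
  (∀ (a : TAut d) (_ : a ∈ automatonGroup A) (h : a ∈ gft d D P), χ ⟨a, h⟩ = 1) ∧
  (∃ m : ℕ, ∀ γ : ↥(gft d D P), (γ : TAut d) ∈ lst d m → χ γ = 1)

lemma ker_isOpen_of_VProp {χ : ↥(gft d D P) →* Multiplicative (ZMod p)}
    {m : ℕ} (hm : ∀ γ : ↥(gft d D P), (γ : TAut d) ∈ lst d m → χ γ = 1) :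
    IsOpen (χ.ker : Set ↥(gft d D P)) := by
  rw [isOpen_iff_forall_mem_open]
  intro γ₀ hγ₀
  refine ⟨(fun γ : ↥(gft d D P) => ((γ₀⁻¹ * γ : ↥(gft d D P)) : TAut d)) ⁻¹'
    ((lst d m : Subgroup (TAut d)) : Set (TAut d)), ?_, ?_, ?_⟩
  · intro γ hγ
    simp only [Set.mem_preimage, SetLike.mem_coe] at hγ
    have h1 : χ (γ₀⁻¹ * γ) = 1 := hm _ hγ
    have h2 : χ γ = χ γ₀ * χ (γ₀⁻¹ * γ) := by
      rw [← map_mul]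
      congr 1
      group
    rw [SetLike.mem_coe, MonoidHom.mem_ker] at hγ₀ ⊢
    rw [h2, hγ₀, h1, one_mul]
  · exact (isOpen_lst d m).preimage
      (continuous_subtype_val.comp (continuous_const.mul continuous_id))
  · simp only [Set.mem_preimage, inv_mul_cancel, SetLike.mem_coe]
    exact one_mem _

lemma Vset_finite (hp : p.Prime) (htfg : TopFG (gft d D P)) :
    {χ : ↥(gft d D P) →* Multiplicative (ZMod p) | VProp p P A χ}.Finite := by
  haveI : NeZero p := ⟨hp.ne_zero⟩
  set Γ := ↥(gft d D P) with hΓ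
  set X : Set Γ := {γ | (γ : TAut d) ∈ automatonGroup A} ∪
    ({γ | ∃ a b : Γ, γ = a * b * a⁻¹ * b⁻¹} ∪ {γ | ∃ β : Γ, γ = β ^ p}) with hX
  set N₀ : Subgroup Γ := Subgroup.normalClosure X with hN₀
  set N : Subgroup Γ := N₀.topologicalClosure with hN
  haveI hNnormal : N.Normal := Subgroup.is_normal_topologicalClosure N₀
  have hXN : X ⊆ N := fun x hx =>
    Subgroup.le_topologicalClosure N₀ (Subgroup.subset_normalClosure hx)
  -- every χ with VProp kills N
  have key1 : ∀ χ : Γ →* Multiplicative (ZMod p), VProp p P A χ → N ≤ χ.ker := by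
    intro χ hχ
    obtain ⟨m, hm⟩ := hχ.2
    apply Subgroup.topologicalClosure_minimal
    · apply Subgroup.normalClosure_le_normal
      rintro x (hx | hx | hx)
      · rw [SetLike.mem_coe, MonoidHom.mem_ker]
        have := hχ.1 (x : TAut d) hx x.2
        simpa using this
      · obtain ⟨a, b, rfl⟩ := hx
        rw [SetLike.mem_coe, MonoidHom.mem_ker]
        simp only [map_mul, map_inv]
        rw [mul_comm (χ a) (χ b)]
        erw [map_inv χ a, map_inv χ b]
        group
      · obtain ⟨β, rfl⟩ := hx
        rw [SetLike.mem_coe, MonoidHom.mem_ker, map_pow]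
        exact mult_zmod_pow_p _
    · exact Subgroup.isClosed_of_isOpen _ (ker_isOpen_of_VProp hm)
  -- the quotient
  set Q := Γ ⧸ N with hQ
  have hcomm : ∀ a b : Q, a * b = b * a := by
    intro a b
    obtain ⟨x, rfl⟩ := QuotientGroup.mk'_surjective N a
    obtain ⟨y, rfl⟩ := QuotientGroup.mk'_surjective N b
    rw [← map_mul, ← map_mul, mk'_eq_iff]
    apply hXN
    refine Or.inr (Or.inl ⟨y⁻¹, x⁻¹, ?_⟩)
    simp [mul_assoc]
    exact (congrArg₂ (· * ·) (inv_inv y) (inv_inv x)).symm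
  have hexp : ∀ q : Q, q ^ p = 1 := by
    intro q
    obtain ⟨x, rfl⟩ := QuotientGroup.mk'_surjective N q
    rw [← map_pow]
    show ((x ^ p : Γ) : Q) = 1
    rw [QuotientGroup.eq_one_iff]
    exact hXN (Or.inr (Or.inr ⟨x, rfl⟩))
  obtain ⟨S, hSfin, hSdense⟩ := htfg
  set Q₀ : Subgroup Q := (Subgroup.closure S).map (QuotientGroup.mk' N) with hQ₀
  have hQ₀fin : ((Q₀ : Subgroup Q) : Set Q).Finite := by
    rw [hQ₀, MonoidHom.map_closure]
    exact finite_closure_of_exponent hcomm hp.pos hexp (hSfin.image _)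
  have hcover : ∀ γ : Γ, QuotientGroup.mk' N γ ∈ Q₀ := by
    have hclosed : IsClosed (⋃ q ∈ ((Q₀ : Subgroup Q) : Set Q),
        ((QuotientGroup.mk' N) ⁻¹' {q} : Set Γ)) := by
      apply Set.Finite.isClosed_biUnion hQ₀fin
      intro q _
      obtain ⟨β, hβ⟩ := QuotientGroup.mk'_surjective N q
      have heq : ((QuotientGroup.mk' N) ⁻¹' {q} : Set Γ)
          = (fun γ' : Γ => β⁻¹ * γ') ⁻¹' ((N : Subgroup Γ) : Set Γ) := by
        ext γ'
        simp only [Set.mem_preimage, Set.mem_singleton_iff, SetLike.mem_coe]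
        rw [← hβ, eq_comm, mk'_eq_iff]
      rw [heq]
      exact (N₀.isClosed_topologicalClosure).preimage (continuous_const.mul continuous_id)
    have hsub : ((Subgroup.closure S : Subgroup Γ) : Set Γ) ⊆
        ⋃ q ∈ ((Q₀ : Subgroup Q) : Set Q), ((QuotientGroup.mk' N) ⁻¹' {q} : Set Γ) := by
      intro f hf
      apply Set.mem_biUnion (Subgroup.mem_map.mpr ⟨f, hf, rfl⟩)
      exact rfl
    intro γ
    have hγ : γ ∈ closure ((Subgroup.closure S : Subgroup Γ) : Set Γ) := hSdense γ
    have := closure_minimal hsub hclosed hγ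
    obtain ⟨q, hq, hmem⟩ := Set.mem_iUnion₂.mp this
    rw [Set.mem_preimage, Set.mem_singleton_iff] at hmem
    rw [hmem]
    exact hq
  haveI hQfin : Finite Q := by
    apply Set.finite_univ_iff.mp
    apply hQ₀fin.subset
    intro q _
    obtain ⟨γ, rfl⟩ := QuotientGroup.mk'_surjective N q
    exact hcover γ
  haveI : Finite (Q →* Multiplicative (ZMod p)) :=
    Finite.of_injective (fun f => (f : Q → Multiplicative (ZMod p))) DFunLike.coe_injective
  -- inject Vset into homs from Q
  classical
  set L : (Γ →* Multiplicative (ZMod p)) → (Q →* Multiplicative (ZMod p)) :=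
    fun χ => if h : N ≤ χ.ker then QuotientGroup.lift N χ h else 1 with hL
  have hinj : Set.InjOn L {χ | VProp p P A χ} := by
    intro χ hχ χ' hχ' heq
    rw [hL] at heq
    simp only [dif_pos (key1 χ hχ), dif_pos (key1 χ' hχ')] at heq
    ext γ
    have h1 : QuotientGroup.lift N χ (key1 χ hχ) (QuotientGroup.mk' N γ) = χ γ :=
      QuotientGroup.lift_mk' _ _ _
    have h2 : QuotientGroup.lift N χ' (key1 χ' hχ') (QuotientGroup.mk' N γ) = χ' γ :=
      QuotientGroup.lift_mk' _ _ _
    rw [← h1, ← h2, heq]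
  exact Set.Finite.of_finite_image (Set.Finite.subset Set.finite_univ (Set.subset_univ _)) hinj

end Vfinite

section MainArgument

variable {p d D : ℕ} {P : Subgroup (FAut d D)} {A : FiniteAutomaton d}

noncomputable def letterMap (g : TAut d) : Fin d → Fin d :=
  fun x => (length_one_letter g x).choose

lemma letterMap_spec (g : TAut d) (x : Fin d) :
    (g : Equiv.Perm (Vertex d)) [x] = [letterMap g x] :=
  (length_one_letter g x).choose_spec

lemma letterMap_injective (g : TAut d) : Function.Injective (letterMap g) := by
  intro x y hxy
  have h : (g : Equiv.Perm (Vertex d)) [x] = (g : Equiv.Perm (Vertex d)) [y] := by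
    rw [letterMap_spec, letterMap_spec, hxy]
  have := (g : Equiv.Perm (Vertex d)).injective h
  simpa using this

noncomputable def Psi (χ : ↥(gft d D P) →* Multiplicative (ZMod p)) :
    ↥(gft d D P) →* Multiplicative (ZMod p) where
  toFun γ := ∏ x : Fin d, χ ⟨sect (γ : TAut d) [x], gft_sect γ.2 [x]⟩
  map_one' := by
    apply Finset.prod_eq_one
    intro x _
    have h1 : (⟨sect (((1 : ↥(gft d D P))) : TAut d) [x],
        gft_sect (1 : ↥(gft d D P)).2 [x]⟩ : ↥(gft d D P)) = 1 := by
      apply Subtype.ext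
      show sect (((1 : ↥(gft d D P))) : TAut d) [x] = (((1 : ↥(gft d D P))) : TAut d)
      rw [OneMemClass.coe_one, sect_one]
    rw [h1]
    exact map_one χ
  map_mul' γ δ := by
    show (∏ x : Fin d, χ ⟨sect ((γ * δ : ↥(gft d D P)) : TAut d) [x], gft_sect (γ * δ).2 [x]⟩)
      = (∏ x : Fin d, χ ⟨sect (γ : TAut d) [x], gft_sect γ.2 [x]⟩)
        * ∏ x : Fin d, χ ⟨sect (δ : TAut d) [x], gft_sect δ.2 [x]⟩
    have hsplit : ∀ x : Fin d,
        (⟨sect ((γ * δ : ↥(gft d D P)) : TAut d) [x], gft_sect (γ * δ).2 [x]⟩ : ↥(gft d D P))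
          = (⟨sect (γ : TAut d) [letterMap (δ : TAut d) x],
              gft_sect γ.2 [letterMap (δ : TAut d) x]⟩ : ↥(gft d D P))
            * ⟨sect (δ : TAut d) [x], gft_sect δ.2 [x]⟩ := by
      intro x
      apply Subtype.ext
      show sect ((γ * δ : ↥(gft d D P)) : TAut d) [x]
        = sect (γ : TAut d) [letterMap (δ : TAut d) x] * sect (δ : TAut d) [x]
      rw [MulMemClass.coe_mul, sect_mul, letterMap_spec]
    have h2 : (∏ x : Fin d, χ ⟨sect ((γ * δ : ↥(gft d D P)) : TAut d) [x],
          gft_sect (γ * δ).2 [x]⟩)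
        = ∏ x : Fin d, (χ ⟨sect (γ : TAut d) [letterMap (δ : TAut d) x],
            gft_sect γ.2 [letterMap (δ : TAut d) x]⟩
              * χ ⟨sect (δ : TAut d) [x], gft_sect δ.2 [x]⟩) := by
      apply Finset.prod_congr rfl
      intro x _
      rw [hsplit x, map_mul]
    rw [h2, Finset.prod_mul_distrib]
    congr 1
    exact Equiv.prod_comp (Equiv.ofBijective _ (Finite.injective_iff_bijective.mp
      (letterMap_injective (δ : TAut d)))) (fun y => χ ⟨sect (γ : TAut d) [y], gft_sect γ.2 [y]⟩)

lemma Psi_apply' (χ : ↥(gft d D P) →* Multiplicative (ZMod p)) (g : TAut d)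
    (hg : g ∈ gft d D P) :
    Psi χ ⟨g, hg⟩ = ∏ x : Fin d, χ ⟨sect g [x], gft_sect hg [x]⟩ := rfl

lemma Psi_VProp {χ : ↥(gft d D P) →* Multiplicative (ZMod p)}
    (hχ : VProp p P A χ) : VProp p P A (Psi χ) := by
  constructor
  · intro a ha h
    rw [Psi_apply']
    apply Finset.prod_eq_one
    intro x _
    exact hχ.1 _ (automatonGroup_sect_letter ha x) _
  · obtain ⟨m, hm⟩ := hχ.2
    refine ⟨m + 1, fun γ hγ => ?_⟩
    obtain ⟨g, hg⟩ := γ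
    have hγ' : g ∈ lst d (1 + m) := by rwa [Nat.add_comm] at hγ
    rw [Psi_apply']
    apply Finset.prod_eq_one
    intro x _
    exact hm _ (sect_mem_lst hγ' (by simp))

end MainArgument

section Graft

variable {p d D : ℕ} {P : Subgroup (FAut d D)} {A : FiniteAutomaton d}

def graftFun (x₀ : Fin d) (f : Vertex d → Vertex d) : Vertex d → Vertex d :=
  fun w => match w with
  | [] => []
  | y :: u => if y = x₀ then y :: f u else y :: u

def graft (g : TAut d) (x₀ : Fin d) : TAut d :=
  ⟨{ toFun := graftFun x₀ (g : Equiv.Perm (Vertex d))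
     invFun := graftFun x₀ ((g : Equiv.Perm (Vertex d)).symm)
     left_inv := by
       intro w
       cases w with
       | nil => rfl
       | cons y u =>
           by_cases h : y = x₀
           · simp [graftFun, h]
           · simp [graftFun, h]
     right_inv := by
       intro w
       cases w with
       | nil => rfl
       | cons y u =>
           by_cases h : y = x₀
           · simp [graftFun, h]
           · simp [graftFun, h] },
   by
    constructor
    · intro v
      cases v with
      | nil => rfl
      | cons y u =>
          by_cases h : y = x₀
          · simp [graftFun, h, length_apply]
          · simp [graftFun, h]
    · intro v w
      cases v with
      | nil => simp [graftFun]
      | cons y u =>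
          show (graftFun x₀ (g : Equiv.Perm (Vertex d)) (y :: (u ++ w))).take (u.length + 1)
            = graftFun x₀ (g : Equiv.Perm (Vertex d)) (y :: u)
          by_cases h : y = x₀
          · simp only [graftFun, if_pos h, List.take_succ_cons]
            congr 1
            exact take_apply g u w
          · simp only [graftFun, if_neg h, List.take_succ_cons, List.take_left]⟩

lemma graft_apply_pos (g : TAut d) (x₀ : Fin d) (u : Vertex d) :
    ((graft g x₀ : TAut d) : Equiv.Perm (Vertex d)) (x₀ :: u)
      = x₀ :: (g : Equiv.Perm (Vertex d)) u := by
  show graftFun x₀ (g : Equiv.Perm (Vertex d)) (x₀ :: u) = _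
  simp [graftFun]

lemma graft_apply_neg (g : TAut d) {x₀ y : Fin d} (h : y ≠ x₀) (u : Vertex d) :
    ((graft g x₀ : TAut d) : Equiv.Perm (Vertex d)) (y :: u) = y :: u := by
  show graftFun x₀ (g : Equiv.Perm (Vertex d)) (y :: u) = _
  simp [graftFun, h]

lemma graft_mem_lst {g : TAut d} {n : ℕ} (hg : g ∈ lst d n) (x₀ : Fin d) :
    graft g x₀ ∈ lst d (n + 1) := by
  intro v hv
  cases v with
  | nil => rfl
  | cons y u =>
      have hu : u.length ≤ n := by simpa using hv
      by_cases h : y = x₀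
      · subst h
        rw [graft_apply_pos, hg u hu]
      · exact graft_apply_neg g h u

lemma sect_graft_self (g : TAut d) (x₀ : Fin d) : sect (graft g x₀) [x₀] = g := by
  apply Subtype.ext
  apply Equiv.ext
  intro w
  rw [sect_apply]
  show (((graft g x₀ : TAut d) : Equiv.Perm (Vertex d)) (x₀ :: w)).drop 1 = _
  rw [graft_apply_pos]
  rfl

lemma sect_graft_other (g : TAut d) {x₀ y : Fin d} (h : y ≠ x₀) :
    sect (graft g x₀) [y] = 1 := by
  apply Subtype.ext
  apply Equiv.ext
  intro w
  rw [sect_apply]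
  show (((graft g x₀ : TAut d) : Equiv.Perm (Vertex d)) (y :: w)).drop 1 = _
  rw [graft_apply_neg g h]
  rfl

lemma graft_mem_gft {g : TAut d} {n : ℕ} (hg : g ∈ gft d D P) (hlst : g ∈ lst d n)
    (hn : D ≤ n + 1) (x₀ : Fin d) : graft g x₀ ∈ gft d D P := by
  intro v
  cases v with
  | nil =>
      rw [sect_nil]
      rw [proj_eq_one.mpr (lst_antitone hn (graft_mem_lst hlst x₀))]
      exact one_mem P
  | cons y u =>
      rw [show (y :: u : Vertex d) = [y] ++ u from rfl, ← sect_sect]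
      by_cases h : y = x₀
      · subst h
        rw [sect_graft_self]
        exact gft_proj_mem (gft_sect hg u)
      · rw [sect_graft_other g h, sect_one, map_one]
        exact one_mem P

end Graft

section Conclusion

variable {p d D : ℕ} {P : Subgroup (FAut d D)} {A : FiniteAutomaton d}

/-- `χ` is nontrivial on the `n`-th level stabilizer of `G_P`. -/
def Pnt (χ : ↥(gft d D P) →* Multiplicative (ZMod p)) (n : ℕ) : Prop :=
  ∃ (g : TAut d) (hg : g ∈ gft d D P), g ∈ lst d n ∧ χ ⟨g, hg⟩ ≠ 1

lemma Pnt_base (hproj : (automatonGroup A).map (proj d D) = P)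
    {χ : ↥(gft d D P) →* Multiplicative (ZMod p)}
    (hχ : VProp p P A χ) (hne : χ ≠ 1) : Pnt χ D := by
  have hGA : automatonGroup A ≤ gft d D P := automatonGroup_le_gft hproj
  obtain ⟨γ, hγ⟩ : ∃ γ : ↥(gft d D P), χ γ ≠ 1 := by
    by_contra hcon
    push_neg at hcon
    exact hne (MonoidHom.ext fun γ => hcon γ)
  have hPmem : proj d D (γ : TAut d) ∈ (automatonGroup A).map (proj d D) := by
    rw [hproj]
    exact gft_proj_mem γ.2
  obtain ⟨a, haGA, haval⟩ := Subgroup.mem_map.mp hPmem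
  have hs : a⁻¹ * (γ : TAut d) ∈ lst d D := proj_eq_proj.mp haval
  have hsgft : a⁻¹ * (γ : TAut d) ∈ gft d D P := mul_mem (inv_mem (hGA haGA)) γ.2
  refine ⟨a⁻¹ * (γ : TAut d), hsgft, hs, ?_⟩
  have hfact : (⟨a⁻¹ * (γ : TAut d), hsgft⟩ : ↥(gft d D P))
      = (⟨a, hGA haGA⟩ : ↥(gft d D P))⁻¹ * γ := by
    apply Subtype.ext
    rfl
  rw [hfact, map_mul, map_inv]
  rw [hχ.1 a haGA (hGA haGA)]
  simpa using hγ

lemma Pnt_step (hd0 : 0 < d) {χ : ↥(gft d D P) →* Multiplicative (ZMod p)}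
    {n : ℕ} (hn : D ≤ n + 1) (h : Pnt χ n) : Pnt (Psi χ) (n + 1) := by
  obtain ⟨g, hg, hlst, hne⟩ := h
  set x₀ : Fin d := ⟨0, hd0⟩ with hx₀
  have hmem : graft g x₀ ∈ gft d D P := graft_mem_gft hg hlst hn x₀
  refine ⟨graft g x₀, hmem, graft_mem_lst hlst x₀, ?_⟩
  have hval : Psi χ ⟨graft g x₀, hmem⟩ = χ ⟨g, hg⟩ := by
    rw [Psi_apply']
    rw [Finset.prod_eq_single x₀ ?h1 ?h2]
    case h1 =>
      intro y _ hy
      rw [show (⟨sect (graft g x₀) [y], gft_sect hmem [y]⟩ : ↥(gft d D P)) = 1 from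
        Subtype.ext (by
          show sect (graft g x₀) [y] = ((1 : ↥(gft d D P)) : TAut d)
          rw [sect_graft_other g hy, OneMemClass.coe_one])]
      exact map_one χ
    case h2 =>
      intro habs
      exact absurd (Finset.mem_univ x₀) habs
    exact congrArg χ (Subtype.ext (sect_graft_self g x₀))
  rw [hval]
  exact hne

lemma Pnt_bound {χ : ↥(gft d D P) →* Multiplicative (ZMod p)} {m : ℕ}
    (hm : ∀ γ : ↥(gft d D P), (γ : TAut d) ∈ lst d m → χ γ = 1)
    {n : ℕ} (h : Pnt χ n) : n < m := by
  by_contra hc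
  push_neg at hc
  obtain ⟨g, hg, hlst, hne⟩ := h
  exact hne (hm ⟨g, hg⟩ (lst_antitone hc hlst))

lemma VProp_eq_one (hp : p.Prime) (hd0 : 0 < d) (hD : 1 ≤ D)
    (hproj : (automatonGroup A).map (proj d D) = P)
    (htfg : TopFG (gft d D P))
    {χ : ↥(gft d D P) →* Multiplicative (ZMod p)} (hχ : VProp p P A χ) : χ = 1 := by
  by_contra hne
  set c : ℕ → (↥(gft d D P) →* Multiplicative (ZMod p)) := fun k => Psi^[k] χ with hc
  have hck : ∀ k, c (k + 1) = Psi (c k) := fun k => Function.iterate_succ_apply' Psi k χ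
  have hV : ∀ k, VProp p P A (c k) := by
    intro k
    induction k with
    | zero => exact hχ
    | succ k ih => rw [hck]; exact Psi_VProp ih
  have hPn : ∀ k, Pnt (c k) (D + k) := by
    intro k
    induction k with
    | zero =>
        have h0 : c 0 = χ := rfl
        rw [h0, Nat.add_zero]
        exact Pnt_base hproj hχ hne
    | succ k ih =>
        rw [hck, Nat.add_succ]
        exact Pnt_step hd0 (by omega) ih
  have hfin := Vset_finite (A := A) hp htfg
  have hfib : ∀ χ' ∈ {χ'' : ↥(gft d D P) →* Multiplicative (ZMod p) | VProp p P A χ''},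
      ({k : ℕ | c k = χ'}).Finite := by
    intro χ' hχ'
    apply Set.Finite.subset (Set.finite_Iio (hχ'.2.choose))
    intro k hk
    have hk' : c k = χ' := hk
    have hPk : Pnt χ' (D + k) := by rw [← hk']; exact hPn k
    have hlt := Pnt_bound (hχ'.2.choose_spec) hPk
    simp only [Set.mem_Iio]
    omega
  have huniv : (Set.univ : Set ℕ).Finite := by
    apply Set.Finite.subset (hfin.biUnion hfib)
    intro k _
    exact Set.mem_biUnion (hV k) rfl
  exact Set.infinite_univ huniv

lemma approx_all (hp : p.Prime) (hD : 1 ≤ D) (hd0 : 0 < d)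
    (hPp : IsPGroup p ↥P) (htfg : TopFG (gft d D P))
    (hproj : (automatonGroup A).map (proj d D) = P) (n : ℕ) :
    ∀ g ∈ gft d D P, ∃ a ∈ automatonGroup A, g⁻¹ * a ∈ lst d n := by
  by_contra hcon
  push_neg at hcon
  obtain ⟨g, hg, hga⟩ := hcon
  haveI : Finite (FAut d n) := finite_FAut d n
  set Γim : Subgroup (FAut d n) := (gft d D P).map (proj d n) with hΓim
  haveI : Finite ↥Γim := Subtype.finite
  have hpg : IsPGroup p ↥Γim := by
    intro ξ
    obtain ⟨h, hh, hval⟩ := Subgroup.mem_map.mp ξ.2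
    obtain ⟨k, hk⟩ := pgroup_level hp hD hPp n h hh
    refine ⟨k, ?_⟩
    apply Subtype.ext
    rw [SubgroupClass.coe_pow, OneMemClass.coe_one, ← hval, ← map_pow]
    rw [← map_pow] at hk
    exact hk
  set ψ : ↥(gft d D P) →* ↥Γim :=
    ((proj d n).comp (gft d D P).subtype).codRestrict Γim
      (fun γ => Subgroup.mem_map.mpr ⟨γ.1, γ.2, rfl⟩) with hψ
  have hψval : ∀ γ : ↥(gft d D P), (ψ γ : FAut d n) = proj d n (γ : TAut d) := fun γ => rfl
  set Kbar : Subgroup ↥Γim := ((automatonGroup A).map (proj d n)).comap Γim.subtype with hKbar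
  have hKtop : Kbar ≠ ⊤ := by
    intro htop
    have hmem : (⟨proj d n g, Subgroup.mem_map.mpr ⟨g, hg, rfl⟩⟩ : ↥Γim) ∈ Kbar := by
      rw [htop]; trivial
    rw [Subgroup.mem_comap] at hmem
    obtain ⟨a, haGA, haval⟩ := Subgroup.mem_map.mp hmem
    exact hga a haGA (proj_eq_proj.mp haval.symm)
  obtain ⟨χ₁, hχ₁ker, hχ₁ne⟩ := exists_hom_pgroup hp hpg Kbar hKtop
  set χ : ↥(gft d D P) →* Multiplicative (ZMod p) := χ₁.comp ψ with hχdef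
  have hχV : VProp p P A χ := by
    constructor
    · intro a ha h
      have hmem : ψ ⟨a, h⟩ ∈ Kbar := by
        rw [hKbar, Subgroup.mem_comap]
        have : (Γim.subtype) (ψ ⟨a, h⟩) = proj d n a := hψval ⟨a, h⟩
        rw [this]
        exact Subgroup.mem_map.mpr ⟨a, ha, rfl⟩
      have := hχ₁ker hmem
      rw [MonoidHom.mem_ker] at this
      exact this
    · refine ⟨n, fun γ hγ => ?_⟩
      have hψ1 : ψ γ = 1 := by
        apply Subtype.ext
        rw [hψval γ, OneMemClass.coe_one]
        exact proj_eq_one.mpr hγ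
      show χ₁ (ψ γ) = 1
      rw [hψ1, map_one]
  have hχne : χ ≠ 1 := by
    intro hcon1
    apply hχ₁ne
    ext ξ
    obtain ⟨h, hh, hval⟩ := Subgroup.mem_map.mp ξ.2
    have hψξ : ψ ⟨h, hh⟩ = ξ := Subtype.ext (by rw [hψval]; exact hval)
    have h1 : χ ⟨h, hh⟩ = 1 := by rw [hcon1]; rfl
    have h2 : χ₁ (ψ ⟨h, hh⟩) = 1 := h1
    rw [hψξ] at h2
    rw [h2]
    rfl
  exact hχne (VProp_eq_one hp hd0 hD hproj htfg hχV)

end Conclusion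
/-- Let `p` be a prime and `P ≤ Aut(T^D)` a minimal pattern subgroup which
is a `p`-group, such that `G_P` is topologically finitely generated.  If `𝒜` is a finite
invertible automaton over the alphabet `{1,…,d}` with `π_D(G(𝒜)) = P`, then the closure of
`G(𝒜)` in `Aut(T)` equals `G_P`. -/
theorem statement_18 (p d D : ℕ) (hp : p.Prime) (hD : 1 ≤ D)
    (P : Subgroup (FAut d D)) (hmin : IsMinimalPattern d D P)
    (hPp : IsPGroup p ↥P) (htfg : TopFG (gft d D P))
    (A : FiniteAutomaton d)
    (hproj : (automatonGroup A).map (proj d D) = P) :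
    closure ((automatonGroup A : Subgroup (TAut d)) : Set (TAut d))
      = ((gft d D P : Subgroup (TAut d)) : Set (TAut d)) := by
  have hGA : automatonGroup A ≤ gft d D P := automatonGroup_le_gft hproj
  have hsub1 : closure ((automatonGroup A : Subgroup (TAut d)) : Set (TAut d))
      ⊆ ((gft d D P : Subgroup (TAut d)) : Set (TAut d)) :=
    closure_minimal (fun x hx => hGA hx) (isClosed_gft d D P)
  rcases Nat.eq_zero_or_pos d with hd0 | hd0
  · subst hd0
    haveI hVsub : Subsingleton (Vertex 0) := by
      constructor
      intro a b
      have h0 : ∀ v : Vertex 0, v = [] := by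
        intro v
        cases v with
        | nil => rfl
        | cons x _ => exact x.elim0
      rw [h0 a, h0 b]
    haveI : Subsingleton (TAut 0) := by
      constructor
      intro a b
      apply Subtype.ext
      apply Equiv.ext
      intro v
      exact Subsingleton.elim _ _
    apply Set.eq_of_subset_of_subset hsub1
    intro g _
    have hg1 : g = 1 := Subsingleton.elim g 1
    rw [hg1]
    exact subset_closure (one_mem (automatonGroup A))
  · apply Set.eq_of_subset_of_subset hsub1
    intro g hgmem
    rw [SetLike.mem_coe] at hgmem
    apply mem_closure_of_approx
    intro n
    obtain ⟨a, ha, hal⟩ := approx_all hp hD hd0 hPp htfg hproj n g hgmem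
    exact ⟨a, ha, hal⟩

end TreeFT
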